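/- For any C² function u on ℝ^{1+n}: K₁u · □u = (1/2) ∂_t( t Σ_{α=0}^n |∂_α u|² + 2 x^b ∂_b u ∂_t u ) − (1/2) ∂_a( 2t ∂_t u ∂_a u + 2 x^b ∂_b u ∂_a u + x^a |∂_t u|² − x^a Σ_b |∂_b u|² ) + ((n-1)/2)( |∂_t u|² − Σ_b |∂_b u|² ), where K₁ = t∂_t + x^a∂_a. -/

import Mathlib

noncomputable section

/-- Partial derivative in the `i`-th coordinate direction on `ℝ^m`. -/
def pd {m : ℕ} (u : (Fin m → ℝ) → ℝ) (i : Fin m) (x : Fin m → ℝ) : ℝ :=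
  fderiv ℝ u x (Pi.single i 1)

section helpers
variable {m : ℕ} {f g : (Fin m → ℝ) → ℝ} {p : Fin m → ℝ} {i : Fin m}

lemma pd_mul (hf : DifferentiableAt ℝ f p) (hg : DifferentiableAt ℝ g p) :
    pd (fun q => f q * g q) i p = pd f i p * g p + f p * pd g i p := by
  unfold pd
  rw [fderiv_fun_mul hf hg]
  simp; ring

lemma pd_add (hf : DifferentiableAt ℝ f p) (hg : DifferentiableAt ℝ g p) :
    pd (fun q => f q + g q) i p = pd f i p + pd g i p := by
  unfold pd; rw [fderiv_fun_add hf hg]; simp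

lemma pd_sub (hf : DifferentiableAt ℝ f p) (hg : DifferentiableAt ℝ g p) :
    pd (fun q => f q - g q) i p = pd f i p - pd g i p := by
  unfold pd; rw [fderiv_fun_sub hf hg]; simp

lemma pd_const_mul (c : ℝ) (hf : DifferentiableAt ℝ f p) :
    pd (fun q => c * f q) i p = c * pd f i p := by
  unfold pd; rw [fderiv_const_mul hf]; simp

lemma pd_sum {ι : Type*} (s : Finset ι) (F : ι → (Fin m → ℝ) → ℝ)
    (hF : ∀ j ∈ s, DifferentiableAt ℝ (F j) p) :
    pd (fun q => ∑ j ∈ s, F j q) i p = ∑ j ∈ s, pd (F j) i p := by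
  unfold pd; rw [fderiv_fun_sum hF]; simp

lemma pd_sq (hf : DifferentiableAt ℝ f p) :
    pd (fun q => f q ^ 2) i p = 2 * f p * pd f i p := by
  have := pd_mul (i := i) hf hf
  simp only [← pow_two] at this
  rw [this]; ring

lemma pd_const (c : ℝ) : pd (fun _ => c) i p = 0 := by
  unfold pd; rw [fderiv_fun_const]; simp

lemma pd_coord (j : Fin m) : pd (fun q => q j) i p = if j = i then 1 else 0 := by
  unfold pd
  have h : (fun q : Fin m → ℝ => q j) = (ContinuousLinearMap.proj j : ((Fin m → ℝ) →L[ℝ] ℝ)) := rfl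
  rw [h, ContinuousLinearMap.fderiv]
  simp [Pi.single_apply]

@[fun_prop] lemma differentiableAt_pd {u : (Fin m → ℝ) → ℝ} (hu : ContDiff ℝ 2 u)
    (α : Fin m) (p : Fin m → ℝ) : DifferentiableAt ℝ (pd u α) p := by
  have h1 : ContDiff ℝ 1 (fderiv ℝ u) := hu.fderiv_right (by norm_num : (1:WithTop ℕ∞)+1 ≤ 2)
  exact ((h1.clm_apply contDiff_const).differentiable one_ne_zero).differentiableAt

lemma pd_pd_symm {u : (Fin m → ℝ) → ℝ} (hu : ContDiff ℝ 2 u) (α β : Fin m) (p : Fin m → ℝ) :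
    pd (pd u α) β p = pd (pd u β) α p := by
  have hd : DifferentiableAt ℝ (fderiv ℝ u) p :=
    ((hu.fderiv_right (by norm_num : (1:WithTop ℕ∞)+1 ≤ 2)).differentiable one_ne_zero).differentiableAt
  have key : ∀ γ δ : Fin m, pd (pd u γ) δ p = fderiv ℝ (fderiv ℝ u) p (Pi.single δ 1) (Pi.single γ 1) := by
    intro γ δ
    unfold pd
    rw [fderiv_clm_apply hd (differentiableAt_const _)]
    simp
  rw [key, key]
  exact (hu.contDiffAt.isSymmSndFDerivAt (by norm_num)) _ _
end helpers


lemma multiplier_algebra (n : ℕ) (t V0 W00 : ℝ) (x V M : Fin n → ℝ) (W : Fin n → Fin n → ℝ)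
    (hW : ∀ a b, W a b = W b a) :
    (t * V0 + ∑ a : Fin n, x a * V a) * (W00 - ∑ a : Fin n, W a a) =
      1 / 2 *
          (V0 ^ 2 + ∑ i : Fin n, V i ^ 2 +
              t * (2 * V0 * W00 + ∑ i : Fin n, 2 * V i * M i) +
            ((2 * ∑ a : Fin n, x a * M a) * V0 +
              (2 * ∑ b : Fin n, x b * V b) * W00)) -
        1 / 2 *
          ∑ a : Fin n,
            (2 * t * M a * V a + 2 * t * V0 * W a a +
                  (2 * (V a + ∑ b : Fin n, x b * W b a) * V a +
                    (2 * ∑ b : Fin n, x b * V b) * W a a) +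
                (V0 ^ 2 + x a * (2 * V0 * M a)) -
              (∑ i : Fin n, V i ^ 2 + x a * ∑ b : Fin n, 2 * V b * W b a)) +
      ((n : ℝ) - 1) / 2 * (V0 ^ 2 - ∑ i : Fin n, V i ^ 2) := by
  have hME : (∑ i : Fin n, 2 * V i * M i) = 2 * ∑ i : Fin n, M i * V i := by
    rw [Finset.mul_sum]; exact Finset.sum_congr rfl fun _ _ => by ring
  have hFG : ∑ a : Fin n, x a * ∑ b : Fin n, 2 * V b * W b a
      = 2 * ∑ a : Fin n, ((∑ b : Fin n, x b * W b a) * V a) := by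
    rw [Finset.mul_sum]
    simp only [Finset.mul_sum, Finset.sum_mul]
    rw [Finset.sum_comm]
    exact Finset.sum_congr rfl fun i _ => Finset.sum_congr rfl fun j _ => by rw [hW]; ring
  have hsplit : ∑ a : Fin n,
            (2 * t * M a * V a + 2 * t * V0 * W a a +
                  (2 * (V a + ∑ b : Fin n, x b * W b a) * V a +
                    (2 * ∑ b : Fin n, x b * V b) * W a a) +
                (V0 ^ 2 + x a * (2 * V0 * M a)) -
              (∑ i : Fin n, V i ^ 2 + x a * ∑ b : Fin n, 2 * V b * W b a))
      = (2 * t) * ∑ a : Fin n, M a * V a + (2 * t * V0) * ∑ a : Fin n, W a a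
        + 2 * ∑ i : Fin n, V i ^ 2 + 2 * ∑ a : Fin n, ((∑ b : Fin n, x b * W b a) * V a)
        + (2 * ∑ b : Fin n, x b * V b) * ∑ a : Fin n, W a a
        + (n : ℝ) * V0 ^ 2 + (2 * V0) * ∑ a : Fin n, x a * M a
        - (n : ℝ) * ∑ i : Fin n, V i ^ 2
        - ∑ a : Fin n, x a * ∑ b : Fin n, 2 * V b * W b a := by
    rw [show ∑ a : Fin n,
            (2 * t * M a * V a + 2 * t * V0 * W a a +
                  (2 * (V a + ∑ b : Fin n, x b * W b a) * V a +
                    (2 * ∑ b : Fin n, x b * V b) * W a a) +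
                (V0 ^ 2 + x a * (2 * V0 * M a)) -
              (∑ i : Fin n, V i ^ 2 + x a * ∑ b : Fin n, 2 * V b * W b a))
        = ∑ a : Fin n, ((2 * t) * (M a * V a) + (2 * t * V0) * W a a
            + 2 * V a ^ 2 + 2 * ((∑ b : Fin n, x b * W b a) * V a)
            + (2 * ∑ b : Fin n, x b * V b) * W a a
            + V0 ^ 2 + (2 * V0) * (x a * M a)
            - (∑ i : Fin n, V i ^ 2)
            - x a * ∑ b : Fin n, 2 * V b * W b a) from
      Finset.sum_congr rfl fun a _ => by ring]
    simp only [Finset.sum_sub_distrib, Finset.sum_add_distrib, ← Finset.mul_sum,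
      Finset.sum_const, Finset.card_univ, Fintype.card_fin, nsmul_eq_mul]
  rw [hME, hsplit, hFG]
  ring

/-- D'Alembert operator `□ = ∂_t² − Σ_a ∂_a²` on `ℝ^{1+n}` (index `0` is time). -/
def Box {n : ℕ} (u : (Fin (n + 1) → ℝ) → ℝ) (p : Fin (n + 1) → ℝ) : ℝ :=
  pd (pd u 0) 0 p - ∑ a : Fin n, pd (pd u a.succ) a.succ p

/-- Scaling field `K₁u = t ∂_t u + x^a ∂_a u`. -/
def K1 {n : ℕ} (u : (Fin (n + 1) → ℝ) → ℝ) (p : Fin (n + 1) → ℝ) : ℝ :=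
  p 0 * pd u 0 p + ∑ a : Fin n, p a.succ * pd u a.succ p

/-- pointwise identity for the multiplier `K₁u`:
`K₁u·□u = (1/2)∂_t( t Σ|∂u|² + 2x^b∂_bu ∂_tu ) − (1/2)∂_a(...)
  + ((n-1)/2)(|∂_tu|² − Σ|∂_bu|²)`. -/
theorem divergence_identity_scaling
    (n : ℕ) (hn : 1 ≤ n) (u : (Fin (n + 1) → ℝ) → ℝ) (hu : ContDiff ℝ 2 u)
    (p : Fin (n + 1) → ℝ) :
    K1 u p * Box u p =
      (1 / 2) * pd (fun q =>
          q 0 * ∑ α : Fin (n + 1), (pd u α q) ^ 2 +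
            2 * (∑ b : Fin n, q b.succ * pd u b.succ q) * pd u 0 q) 0 p -
      (1 / 2) * (∑ a : Fin n, pd (fun q =>
          2 * q 0 * pd u 0 q * pd u a.succ q +
            2 * (∑ b : Fin n, q b.succ * pd u b.succ q) * pd u a.succ q +
            q a.succ * (pd u 0 q) ^ 2 -
            q a.succ * (∑ b : Fin n, (pd u b.succ q) ^ 2)) a.succ p) +
      (((n : ℝ) - 1) / 2) * ((pd u 0 p) ^ 2 - ∑ b : Fin n, (pd u b.succ p) ^ 2) := by
  simp (disch := fun_prop) only [pd_add, pd_sub, pd_mul, pd_const_mul, pd_sum, pd_sq, pd_coord]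
  have h0s : ∀ a : Fin n, (0 : Fin (n+1)) ≠ a.succ := fun a => (Fin.succ_ne_zero a).symm
  simp only [pd_const, Fin.succ_ne_zero, h0s, if_true, if_false, if_neg, Fin.succ_inj,
    ite_mul, one_mul, zero_mul, mul_zero, zero_add, add_zero,
    Finset.sum_add_distrib, Finset.sum_ite_eq', Finset.mem_univ]
  simp only [Fin.sum_univ_succ, pd_pd_symm hu _ 0]
  unfold K1 Box
  exact multiplier_algebra n (p 0) (pd u 0 p) (pd (pd u 0) 0 p)
    (fun a => p a.succ) (fun a => pd u a.succ p) (fun a => pd (pd u 0) a.succ p)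
    (fun a b => pd (pd u a.succ) b.succ p)
    (fun a b => pd_pd_symm hu _ _ p)
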